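/- Let K₁ ⊆ K₂ be a field extension and T a transcendence basis for K₂ over K₁. Then for each x ∈ K₂ there is a unique minimal finite subset S ⊆ T such that x is algebraic over K₁(S). -/

import Mathlib

open Polynomial IntermediateField
set_option maxHeartbeats 1000000
set_option synthInstance.maxHeartbeats 400000

lemma aux_range_elim {ι E : Type*} (a : E) (f : ι → E) :
    Set.range (fun o : Option ι => o.elim a f) = insert a (Set.range f) := by
  ext z
  constructor
  · rintro ⟨(_ | i), rfl⟩
    · exact Set.mem_insert _ _
    · exact Set.mem_insert_of_mem _ ⟨i, rfl⟩
  · rintro (rfl | ⟨i, rfl⟩)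
    · exact ⟨none, rfl⟩
    · exact ⟨some i, rfl⟩

section
variable {F E : Type*} [Field F] [Field E] [Algebra F E]

lemma aux_isAlgebraic_adjoin_iff (S : Set E) (y : E) :
    IsAlgebraic (Algebra.adjoin F S) y ↔ IsAlgebraic (IntermediateField.adjoin F S) y := by
  classical
  set A := Algebra.adjoin F S with hA
  have hg : Function.Injective (A.val : A →ₐ[F] E) := Subtype.val_injective
  let f : FractionRing A →ₐ[F] E := IsFractionRing.liftAlgHom hg
  have hrange : f.fieldRange = IntermediateField.adjoin F S :=
    IsFractionRing.liftAlgHom_fieldRange_eq_of_range_eq hg (by simp [Subalgebra.range_val, hA])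
  letI : Algebra (FractionRing A) E := f.toRingHom.toAlgebra
  haveI : IsScalarTower A (FractionRing A) E := IsScalarTower.of_algebraMap_eq fun a => by
    simp [RingHom.algebraMap_toAlgebra, f, IsFractionRing.liftAlgHom_apply,
      IsFractionRing.lift_algebraMap]
  rw [IsFractionRing.isAlgebraic_iff A (FractionRing A) E]
  let e : FractionRing A ≃ₐ[F] (IntermediateField.adjoin F S) :=
    (AlgEquiv.ofInjectiveField f).trans (IntermediateField.equivOfEq hrange)
  have hcomp : RingHom.comp (algebraMap (IntermediateField.adjoin F S) E) e.toRingEquiv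
      = RingHom.comp (RingHom.id E) (algebraMap (FractionRing A) E) := by
    ext a
    show ((e a : E)) = f a
    simp [e, AlgEquiv.trans_apply]
    rfl
  exact (isAlgebraic_ringHom_iff_of_comp_eq e.toRingEquiv (RingHom.id E)
    Function.injective_id hcomp).symm

lemma aux_exchange {U : Set E} (hU : AlgebraicIndependent F ((↑) : U → E)) {y s : E}
    (hy : ¬ IsAlgebraic (Algebra.adjoin F U) y)
    (h : IsAlgebraic (Algebra.adjoin F (insert s U)) y) :
    IsAlgebraic (Algebra.adjoin F (insert y U)) s := by
  classical
  by_contra hcon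
  have hind : AlgebraicIndependent F (fun o : Option U => o.elim y ((↑) : U → E)) :=
    (hU.option_iff_transcendental y).2 (by rwa [Subtype.range_coe])
  have big : AlgebraicIndependent F
      (fun o' : Option (Option U) => o'.elim s (fun o : Option U => o.elim y ((↑) : U → E))) :=
    (hind.option_iff_transcendental s).2 (by rwa [aux_range_elim, Subtype.range_coe])
  have hg : AlgebraicIndependent F (fun o : Option U => o.elim s ((↑) : U → E)) := by
    have := big.comp (Option.map some) (Option.map_injective (Option.some_injective _))
    convert this using 1
    funext o
    cases o <;> rfl
  have reord : AlgebraicIndependent F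
      (fun o' : Option (Option U) => o'.elim y (fun o : Option U => o.elim s ((↑) : U → E))) := by
    refine algebraicIndependent_equiv' (Equiv.swap none (some none)) ?_ |>.1 big
    funext o'
    rcases o' with (_ | _ | u)
    · simp [Equiv.swap_apply_left]
    · simp [Equiv.swap_apply_right]
    · rw [Function.comp_apply, Equiv.swap_apply_of_ne_of_ne (by simp) (by simp)]
      rfl
  have := (hg.option_iff_transcendental y).1 reord
  rw [aux_range_elim, Subtype.range_coe] at this
  exact this h

lemma aux_mono {U V : Set E} (h : U ⊆ V) {y : E}
    (hy : IsAlgebraic (IntermediateField.adjoin F U) y) :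
    IsAlgebraic (IntermediateField.adjoin F V) y := by
  rw [← aux_isAlgebraic_adjoin_iff] at hy ⊢
  exact hy.tower_top_of_subalgebra_le (Algebra.adjoin_mono h)

lemma aux_transcendental {T : Set E} (hT : AlgebraicIndependent F ((↑) : T → E))
    {V : Set E} {s : E} (hs : s ∈ T) (hV : V ⊆ T) (hsV : s ∉ V) :
    ¬ IsAlgebraic (Algebra.adjoin F V) s := by
  have hVind : AlgebraicIndependent F ((↑) : V → E) := hT.mono hV
  set W : Set E := insert s V with hW
  have hins : AlgebraicIndependent F ((↑) : W → E) :=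
    hT.mono (Set.insert_subset hs hV)
  have key : AlgebraicIndependent F (fun o : Option V => o.elim s ((↑) : V → E)) := by
    have hj : Function.Injective (fun o : Option V => (o.elim ⟨s, Set.mem_insert _ _⟩
        (fun v => ⟨v.1, Set.mem_insert_of_mem _ v.2⟩) : W)) := by
      rintro (_ | u) (_ | v) hh <;> simp only [Option.elim] at hh
      · rfl
      · have : s = (v : E) := congrArg Subtype.val hh
        exact absurd (this ▸ v.2) hsV
      · have : (u : E) = s := congrArg Subtype.val hh
        exact absurd (this ▸ u.2) hsV
      · rw [Subtype.mk.injEq] at hh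
        simp [Subtype.ext hh]
    have := hins.comp _ hj
    convert this using 1
    funext o
    cases o <;> rfl
  have := (hVind.option_iff_transcendental s).1 key
  rwa [Subtype.range_coe] at this

lemma aux_trans {V : Set E} {y s : E}
    (hy : IsAlgebraic (IntermediateField.adjoin F V) y)
    (hs : IsAlgebraic (IntermediateField.adjoin F (insert y V)) s) :
    IsAlgebraic (IntermediateField.adjoin F V) s := by
  set Fv := IntermediateField.adjoin F V with hFv
  haveI : Algebra.IsIntegral Fv Fv⟮y⟯ :=
    (IntermediateField.isAlgebraic_adjoin_simple hy.isIntegral).isIntegral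
  have hres : IsAlgebraic (Fv⟮y⟯) s := by
    have heq : IntermediateField.restrictScalars F (Fv⟮y⟯)
        = IntermediateField.adjoin F (V ∪ {y}) := IntermediateField.adjoin_adjoin_left F V {y}
    rw [Set.union_singleton] at heq
    rw [← heq] at hs
    exact hs
  exact (isIntegral_trans _ hres.isIntegral).isAlgebraic

lemma aux_exists_finset {T : Set E} {x : E}
    (h : IsAlgebraic (IntermediateField.adjoin F T) x) :
    ∃ S : Finset E, ↑S ⊆ T ∧ IsAlgebraic (IntermediateField.adjoin F (S : Set E)) x := by
  classical
  set L := IntermediateField.adjoin F T with hL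
  obtain ⟨p, hp0, hpx⟩ := h
  set P : E[X] := p.map (algebraMap L E) with hP
  have hP0 : P ≠ 0 := by
    rw [hP, Ne, Polynomial.map_eq_zero_iff (algebraMap L E).injective]
    exact hp0
  have hPx : Polynomial.eval x P = 0 := by
    rw [hP, Polynomial.eval_map, ← Polynomial.aeval_def, hpx]
  have hmem : ∀ n, ∃ t : Finset E, ↑t ⊆ T ∧ P.coeff n ∈ IntermediateField.adjoin F (t : Set E) := by
    intro n
    have : P.coeff n ∈ L := by rw [hP, Polynomial.coeff_map]; exact (p.coeff n).2
    exact IntermediateField.exists_finset_of_mem_adjoin this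
  choose t ht1 ht2 using hmem
  refine ⟨P.support.biUnion t, ?_, ?_⟩
  · intro z hz
    rw [Finset.mem_coe, Finset.mem_biUnion] at hz
    obtain ⟨n, -, hzn⟩ := hz
    exact ht1 n hzn
  · set L' := IntermediateField.adjoin F ((P.support.biUnion t : Finset E) : Set E) with hL'
    have hc : ∀ n, P.coeff n ∈ L' := by
      intro n
      by_cases hn : n ∈ P.support
      · exact IntermediateField.adjoin.mono F _ _
          (by exact_mod_cast Finset.coe_subset.2 (Finset.subset_biUnion_of_mem t hn)) (ht2 n)
      · rw [Polynomial.notMem_support_iff.1 hn]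
        exact zero_mem _
    have hlift : P ∈ Polynomial.lifts (algebraMap L' E) :=
      (Polynomial.lifts_iff_coeff_lifts _).2 fun n => ⟨⟨P.coeff n, hc n⟩, rfl⟩
    obtain ⟨q, hq, -⟩ := Polynomial.mem_lifts_and_degree_eq hlift
    refine ⟨q, fun h0 => hP0 (by rw [← hq, h0, Polynomial.map_zero]), ?_⟩
    rw [Polynomial.aeval_def, ← Polynomial.eval_map, hq, hPx]

end

theorem stmt6 (K₁ K₂ : Type) [Field K₁] [Field K₂] [Algebra K₁ K₂]
    (T : Set K₂) (hT : IsTranscendenceBasis K₁ ((↑) : T → K₂)) (x : K₂) :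
    ∃! S : Finset K₂, ↑S ⊆ T ∧
      IsAlgebraic (IntermediateField.adjoin K₁ (S : Set K₂)) x ∧
      ∀ S' : Finset K₂, S' ⊂ S →
        ¬ IsAlgebraic (IntermediateField.adjoin K₁ (S' : Set K₂)) x := by
  classical
  have hTind : AlgebraicIndependent K₁ ((↑) : T → K₂) := hT.1
  have hx : IsAlgebraic (IntermediateField.adjoin K₁ T) x := by
    rw [← aux_isAlgebraic_adjoin_iff]
    have := hT.isAlgebraic.isAlgebraic x
    rwa [Subtype.range_coe] at this
  obtain ⟨S₀, hS₀T, hS₀alg⟩ := aux_exists_finset hx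
  have hex : ∃ n, ∃ S : Finset K₂,
      ((↑S ⊆ T ∧ IsAlgebraic (IntermediateField.adjoin K₁ (S : Set K₂)) x) ∧ S.card = n) :=
    ⟨S₀.card, S₀, ⟨hS₀T, hS₀alg⟩, rfl⟩
  obtain ⟨S, ⟨hST, hSalg⟩, hcard⟩ := Nat.find_spec hex
  have hmin : ∀ S' : Finset K₂, S' ⊂ S →
      ¬ IsAlgebraic (IntermediateField.adjoin K₁ (S' : Set K₂)) x := by
    intro S' hlt halg
    have hc : S'.card < Nat.find hex := hcard ▸ Finset.card_lt_card hlt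
    exact Nat.find_min hex hc ⟨S', ⟨(Finset.coe_subset.2 hlt.subset).trans hST, halg⟩, rfl⟩
  have key : ∀ A B : Finset K₂, ↑A ⊆ T → ↑B ⊆ T →
      IsAlgebraic (IntermediateField.adjoin K₁ (A : Set K₂)) x →
      IsAlgebraic (IntermediateField.adjoin K₁ (B : Set K₂)) x →
      (∀ A' : Finset K₂, A' ⊂ A →
        ¬ IsAlgebraic (IntermediateField.adjoin K₁ (A' : Set K₂)) x) →
      A ⊆ B := by
    intro A B hAT hBT hAalg hBalg hAmin
    intro s hsA
    by_contra hsB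
    have hUx : ¬ IsAlgebraic (IntermediateField.adjoin K₁ ((A.erase s : Finset K₂) : Set K₂)) x :=
      hAmin _ (Finset.erase_ssubset hsA)
    have hUs : IsAlgebraic
        (IntermediateField.adjoin K₁ (insert s ((A.erase s : Finset K₂) : Set K₂))) x := by
      have he : (insert s ((A.erase s : Finset K₂) : Set K₂)) = (A : Set K₂) := by
        rw [← Finset.coe_insert, Finset.insert_erase hsA]
      rwa [he]
    have hUT : ((A.erase s : Finset K₂) : Set K₂) ⊆ T :=
      (Finset.coe_subset.2 (Finset.erase_subset s A)).trans hAT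
    have hUind : AlgebraicIndependent K₁ ((↑) : ((A.erase s : Finset K₂) : Set K₂) → K₂) :=
      hTind.mono hUT
    have hexch : IsAlgebraic
        (IntermediateField.adjoin K₁ (insert x ((A.erase s : Finset K₂) : Set K₂))) s := by
      rw [← aux_isAlgebraic_adjoin_iff] at hUx hUs ⊢
      exact aux_exchange hUind hUx hUs
    set V : Set K₂ := ((A.erase s : Finset K₂) : Set K₂) ∪ (B : Set K₂) with hV
    have hVs : IsAlgebraic (IntermediateField.adjoin K₁ (insert x V)) s :=
      aux_mono (Set.insert_subset_insert Set.subset_union_left) hexch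
    have hxV : IsAlgebraic (IntermediateField.adjoin K₁ V) x :=
      aux_mono Set.subset_union_right hBalg
    have hfin : IsAlgebraic (IntermediateField.adjoin K₁ V) s := aux_trans hxV hVs
    rw [← aux_isAlgebraic_adjoin_iff] at hfin
    refine aux_transcendental hTind (hAT hsA) (Set.union_subset hUT hBT) ?_ hfin
    rintro (hs1 | hs2)
    · exact (Finset.notMem_erase s A) (Finset.mem_coe.1 hs1)
    · exact hsB (Finset.mem_coe.1 hs2)
  refine ⟨S, ⟨hST, hSalg, hmin⟩, ?_⟩
  rintro S₂ ⟨hS₂T, hS₂alg, hS₂min⟩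
  exact Finset.Subset.antisymm (key S₂ S hS₂T hST hS₂alg hSalg hS₂min)
    (key S S₂ hST hS₂T hSalg hS₂alg hmin)
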